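/- Let A₀ be a Noetherian ring, m₀ ⊂ A₀ an ideal, E₀ a finitely generated A₀-module, F₀ ⊆ E₀ a submodule. Let A = A₀[z], m = m₀A + (z), E = E₀[z], F = F₀[z]. Then the Artin–Rees index of F ⊆ E with respect to m equals the Artin–Rees index of F₀ ⊆ E₀ with respect to m₀. -/

import Mathlib

open Polynomial

noncomputable def arIndex {A E : Type*} [CommRing A] [AddCommGroup E] [Module A E]
    (m : Ideal A) (F : Submodule A E) : ℕ :=
  sInf {c : ℕ | ∀ n : ℕ, n > c →
    (m ^ n • ⊤ : Submodule A E) ⊓ F = m ^ (n - c) • ((m ^ c • ⊤) ⊓ F)}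

section AR

variable {A₀ : Type*} [CommRing A₀] (m₀ : Ideal A₀)
variable {E₀ : Type*} [AddCommGroup E₀] [Module A₀ E₀] (F₀ : Submodule A₀ E₀)

/-- The extended ideal `m₀ A₀[X] + (X)`. -/
noncomputable def arM : Ideal A₀[X] := m₀.map (Polynomial.C : A₀ →+* A₀[X]) ⊔ Ideal.span {(Polynomial.X : A₀[X])}

/-- The extended submodule `F₀[X]`. -/
noncomputable def arF : Submodule A₀[X] (PolynomialModule A₀ E₀) :=
  Submodule.span A₀[X]
    ((PolynomialModule.single A₀ 0 : E₀ → PolynomialModule A₀ E₀) '' F₀)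

lemma X_mem_arM : (X : A₀[X]) ∈ arM m₀ :=
  le_sup_right (α := Ideal A₀[X]) (Ideal.mem_span_singleton_self X)

lemma C_mem_arM_pow {k : ℕ} {a : A₀} (ha : a ∈ m₀ ^ k) : (C a : A₀[X]) ∈ (arM m₀) ^ k := by
  have h1 : (C a : A₀[X]) ∈ (m₀.map (C : A₀ →+* A₀[X])) ^ k := by
    rw [← Ideal.map_pow]
    exact Ideal.mem_map_of_mem _ ha
  exact Ideal.pow_right_mono le_sup_left k h1

/-- Coefficients of elements of `(arM m₀)^n`. -/
lemma coeff_mem_of_mem_arM_pow : ∀ {n : ℕ} {q : A₀[X]}, q ∈ (arM m₀) ^ n →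
    ∀ j, q.coeff j ∈ m₀ ^ (n - j) := by
  intro n
  induction n with
  | zero => intro q _ j; simp
  | succ n ih =>
    intro q hq
    rw [pow_succ] at hq
    refine Submodule.mul_induction_on hq ?_ ?_
    · rintro a ha b hb j
      rcases Submodule.mem_sup.mp hb with ⟨x, hx, y, hy, rfl⟩
      rcases Ideal.mem_span_singleton.mp hy with ⟨r, rfl⟩
      have hxj : ∀ t, x.coeff t ∈ m₀ := fun t => Ideal.mem_map_C_iff.mp hx t
      rw [mul_add, Polynomial.coeff_add]
      refine add_mem ?_ ?_
      · -- a * x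
        rw [Polynomial.coeff_mul]
        refine Submodule.sum_mem _ ?_
        rintro ⟨s, t⟩ hst
        have hs : s + t = j := Finset.HasAntidiagonal.mem_antidiagonal.mp hst
        have h1 : a.coeff s ∈ m₀ ^ (n - s) := ih ha s
        have h2 : a.coeff s * x.coeff t ∈ m₀ ^ (n - s) * m₀ :=
          Ideal.mul_mem_mul h1 (hxj t)
        rw [← pow_succ] at h2
        exact Ideal.pow_le_pow_right (by omega) h2
      · -- a * (X * r)
        have : a * (X * r) = X * (a * r) := by ring
        rw [this]
        rcases j with _ | j
        · simp [Polynomial.mul_coeff_zero]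
        · rw [Polynomial.coeff_X_mul]
          have := ih (Ideal.mul_mem_right r _ ha) j
          exact Ideal.pow_le_pow_right (by omega) this
    · intro x y hx hy j
      rw [Polynomial.coeff_add]
      exact add_mem (hx j) (hy j)

/-- Coefficients of elements of `(arM m₀)^n • ⊤`. -/
lemma apply_mem_of_mem_pow_smul_top {n : ℕ} {p : PolynomialModule A₀ E₀}
    (hp : p ∈ ((arM m₀) ^ n • ⊤ : Submodule A₀[X] (PolynomialModule A₀ E₀))) :
    ∀ d, p.coeff d ∈ (m₀ ^ (n - d) • ⊤ : Submodule A₀ E₀) := by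
  refine Submodule.smul_induction_on hp ?_ ?_
  · intro q hq x _ d
    rw [PolynomialModule.smul_apply]
    refine Submodule.sum_mem _ ?_
    rintro ⟨i, j⟩ hij
    have hij' : i + j = d := Finset.HasAntidiagonal.mem_antidiagonal.mp hij
    have h1 : q.coeff i ∈ m₀ ^ (n - d) :=
      Ideal.pow_le_pow_right (by omega) (coeff_mem_of_mem_arM_pow m₀ hq i)
    exact Submodule.smul_mem_smul h1 Submodule.mem_top
  · intro x y hx hy d
    rw [PolynomialModule.coeff_add, Finsupp.add_apply]
    exact add_mem (hx d) (hy d)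

/-- Coefficients of elements of `arF F₀`. -/
lemma apply_mem_of_mem_arF {p : PolynomialModule A₀ E₀} (hp : p ∈ arF F₀) :
    ∀ d, p.coeff d ∈ F₀ := by
  induction hp using Submodule.span_induction with
  | mem x hx =>
    rcases hx with ⟨e, he, rfl⟩
    intro d
    rw [PolynomialModule.coeff_single, Finsupp.single_apply]
    split
    exacts [he, F₀.zero_mem]
  | zero => intro d; simp [F₀.zero_mem]
  | add x y hx hy ihx ihy =>
    intro d; rw [PolynomialModule.coeff_add, Finsupp.add_apply]; exact add_mem (ihx d) (ihy d)
  | smul q x hx ihx =>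
    intro d
    rw [PolynomialModule.smul_apply]
    exact Submodule.sum_mem _ fun ij _ => F₀.smul_mem _ (ihx ij.2)

lemma single_zero_mem_arF {e : E₀} (he : e ∈ F₀) :
    PolynomialModule.single A₀ 0 e ∈ arF F₀ :=
  Submodule.subset_span ⟨e, he, rfl⟩

lemma single_zero_mem_pow_smul_top {k : ℕ} {e : E₀}
    (he : e ∈ (m₀ ^ k • ⊤ : Submodule A₀ E₀)) :
    PolynomialModule.single A₀ 0 e ∈ ((arM m₀) ^ k • ⊤ : Submodule A₀[X] (PolynomialModule A₀ E₀)) := by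
  refine Submodule.smul_induction_on he ?_ ?_
  · intro a ha x _
    have : PolynomialModule.single A₀ 0 (a • x) = (C a : A₀[X]) • PolynomialModule.single A₀ 0 x := by
      rw [PolynomialModule.single_smul, ← algebraMap_smul A₀[X] a, Polynomial.algebraMap_eq]
    rw [this]
    exact Submodule.smul_mem_smul (C_mem_arM_pow m₀ ha) Submodule.mem_top
  · intro x y hx hy
    rw [PolynomialModule.single_add]
    exact add_mem hx hy

lemma single_zero_mem_rhs {s c : ℕ} {e : E₀}
    (he : e ∈ m₀ ^ s • ((m₀ ^ c • ⊤ : Submodule A₀ E₀) ⊓ F₀)) :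
    PolynomialModule.single A₀ 0 e ∈
      (arM m₀) ^ s • (((arM m₀) ^ c • ⊤ : Submodule A₀[X] (PolynomialModule A₀ E₀)) ⊓ arF F₀) := by
  refine Submodule.smul_induction_on he ?_ ?_
  · intro a ha x hx
    have h1 : PolynomialModule.single A₀ 0 (a • x) = (C a : A₀[X]) • PolynomialModule.single A₀ 0 x := by
      rw [PolynomialModule.single_smul, ← algebraMap_smul A₀[X] a, Polynomial.algebraMap_eq]
    rw [h1]
    refine Submodule.smul_mem_smul (C_mem_arM_pow m₀ ha) ?_
    exact ⟨single_zero_mem_pow_smul_top m₀ hx.1, single_zero_mem_arF F₀ hx.2⟩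
  · intro x y hx hy
    rw [PolynomialModule.single_add]
    exact add_mem hx hy

lemma single_eq_X_pow_smul (d : ℕ) (e : E₀) :
    PolynomialModule.single A₀ d e = (X ^ d : A₀[X]) • PolynomialModule.single A₀ 0 e := by
  rw [Polynomial.X_pow_eq_monomial, PolynomialModule.monomial_smul_single, add_zero, one_smul]

/-- Generic reverse inclusion. -/
lemma rhs_le_lhs {A E : Type*} [CommRing A] [AddCommGroup E] [Module A E]
    (m : Ideal A) (F : Submodule A E) {c n : ℕ} (h : c ≤ n) :
    m ^ (n - c) • ((m ^ c • ⊤ : Submodule A E) ⊓ F) ≤ (m ^ n • ⊤) ⊓ F := by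
  refine le_inf ?_ ?_
  · refine le_trans (Submodule.smul_mono le_rfl inf_le_left) ?_
    rw [← Submodule.smul_assoc, Ideal.smul_eq_mul, ← pow_add, Nat.sub_add_cancel h]
  · exact le_trans (Submodule.smul_mono le_rfl inf_le_right) Submodule.smul_le_right

lemma single_mem_rhs_of_T {c n : ℕ}
    (hT : ∀ k : ℕ, k > c →
      (m₀ ^ k • ⊤ : Submodule A₀ E₀) ⊓ F₀ = m₀ ^ (k - c) • ((m₀ ^ c • ⊤) ⊓ F₀))
    (hn : c < n) (d : ℕ) {e : E₀}
    (he1 : e ∈ (m₀ ^ (n - d) • ⊤ : Submodule A₀ E₀)) (he2 : e ∈ F₀) :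
    PolynomialModule.single A₀ d e ∈
      (arM m₀) ^ (n - c) • (((arM m₀) ^ c • ⊤ : Submodule A₀[X] (PolynomialModule A₀ E₀)) ⊓ arF F₀) := by
  rcases le_or_gt (n - c) d with hd | hd
  · have hsplit : (X : A₀[X]) ^ d = X ^ (n - c) * X ^ (d - (n - c)) := by
      rw [← pow_add]; congr 1; omega
    rw [single_eq_X_pow_smul, hsplit, mul_smul]
    refine Submodule.smul_mem_smul (Ideal.pow_mem_pow (X_mem_arM m₀) _) ⟨?_, ?_⟩
    · have h1 : PolynomialModule.single A₀ 0 e ∈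
          ((arM m₀) ^ (n - d) • ⊤ : Submodule A₀[X] (PolynomialModule A₀ E₀)) :=
        single_zero_mem_pow_smul_top m₀ he1
      have h2 : (X : A₀[X]) ^ (d - (n - c)) • PolynomialModule.single A₀ 0 e ∈
          (arM m₀) ^ (d - (n - c)) •
            ((arM m₀) ^ (n - d) • ⊤ : Submodule A₀[X] (PolynomialModule A₀ E₀)) :=
        Submodule.smul_mem_smul (Ideal.pow_mem_pow (X_mem_arM m₀) _) h1
      rw [← Submodule.smul_assoc, Ideal.smul_eq_mul, ← pow_add] at h2
      exact Submodule.smul_mono_left (Ideal.pow_le_pow_right (by omega)) h2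
    · exact Submodule.smul_mem _ _ (single_zero_mem_arF F₀ he2)
  · have h3 : e ∈ m₀ ^ ((n - d) - c) • ((m₀ ^ c • ⊤) ⊓ F₀) := by
      rw [← hT (n - d) (by omega)]; exact ⟨he1, he2⟩
    have h4 := single_zero_mem_rhs m₀ F₀ h3
    rw [single_eq_X_pow_smul]
    have h5 : (X : A₀[X]) ^ d • PolynomialModule.single A₀ 0 e ∈
        (arM m₀) ^ d • ((arM m₀) ^ ((n - d) - c) •
          (((arM m₀) ^ c • ⊤ : Submodule A₀[X] (PolynomialModule A₀ E₀)) ⊓ arF F₀)) :=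
      Submodule.smul_mem_smul (Ideal.pow_mem_pow (X_mem_arM m₀) _) h4
    rw [← Submodule.smul_assoc, Ideal.smul_eq_mul, ← pow_add] at h5
    have he : d + ((n - d) - c) = n - c := by omega
    rwa [he] at h5

lemma eq_sum_single (p : PolynomialModule A₀ E₀) :
    p = p.coeff.support.sum fun d => PolynomialModule.single A₀ d (p.coeff d) :=
  PolynomialModule.coeff_injective (by
    rw [PolynomialModule.coeff_sum]; simp only [PolynomialModule.coeff_single]
    exact (Finsupp.sum_single _).symm)

lemma apply_zero_mem_of_mem_rhs {s c : ℕ} {p : PolynomialModule A₀ E₀}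
    (hp : p ∈ (arM m₀) ^ s •
      (((arM m₀) ^ c • ⊤ : Submodule A₀[X] (PolynomialModule A₀ E₀)) ⊓ arF F₀)) :
    p.coeff 0 ∈ m₀ ^ s • ((m₀ ^ c • ⊤ : Submodule A₀ E₀) ⊓ F₀) := by
  refine Submodule.smul_induction_on hp ?_ ?_
  · intro q hq x hx
    rw [PolynomialModule.smul_apply, Finset.Nat.antidiagonal_zero, Finset.sum_singleton]
    refine Submodule.smul_mem_smul ?_ ?_
    · simpa using coeff_mem_of_mem_arM_pow m₀ hq 0
    · exact ⟨by simpa using apply_mem_of_mem_pow_smul_top m₀ hx.1 0,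
        apply_mem_of_mem_arF F₀ hx.2 0⟩
  · intro x y hx hy
    rw [PolynomialModule.coeff_add, Finsupp.add_apply]
    exact add_mem hx hy

lemma arIndex_eq : arIndex (arM m₀) (arF F₀) = arIndex m₀ F₀ := by
  unfold arIndex
  congr 1
  ext c
  simp only [Set.mem_setOf_eq]
  constructor
  · intro hS n hn
    refine le_antisymm ?_ (rhs_le_lhs m₀ F₀ hn.le)
    intro e he
    have h1 : PolynomialModule.single A₀ 0 e ∈
        ((arM m₀) ^ n • ⊤ : Submodule A₀[X] (PolynomialModule A₀ E₀)) ⊓ arF F₀ :=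
      ⟨single_zero_mem_pow_smul_top m₀ he.1, single_zero_mem_arF F₀ he.2⟩
    rw [hS n hn] at h1
    have h2 := apply_zero_mem_of_mem_rhs m₀ F₀ h1
    simpa [PolynomialModule.single_apply] using h2
  · intro hT n hn
    refine le_antisymm ?_ (rhs_le_lhs _ _ hn.le)
    rintro p ⟨hp1, hp2⟩
    rw [eq_sum_single p]
    exact Submodule.sum_mem _ fun d _ =>
      single_mem_rhs_of_T m₀ F₀ hT hn d (apply_mem_of_mem_pow_smul_top m₀ hp1 d)
        (apply_mem_of_mem_arF F₀ hp2 d)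

end AR

/-- Let `A₀` be Noetherian, `m₀ ⊆ A₀` an ideal, `E₀` a finitely generated
`A₀`-module and `F₀ ⊆ E₀` a submodule.  With `A = A₀[z]`, `m = m₀A + (z)`, `E = E₀[z]` and
`F = F₀[z]`, the Artin–Rees index of `F ⊆ E` with respect to `m` equals the Artin–Rees
index of `F₀ ⊆ E₀` with respect to `m₀`. -/
theorem arIndex_polynomial_extension
    (A₀ : Type*) [CommRing A₀] [IsNoetherianRing A₀] (m₀ : Ideal A₀)
    (E₀ : Type*) [AddCommGroup E₀] [Module A₀ E₀] [Module.Finite A₀ E₀]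
    (F₀ : Submodule A₀ E₀) :
    arIndex
      (m₀.map (Polynomial.C : A₀ →+* A₀[X]) ⊔ Ideal.span {(Polynomial.X : A₀[X])})
      (Submodule.span A₀[X]
        ((PolynomialModule.single A₀ 0 : E₀ → PolynomialModule A₀ E₀) '' F₀))
    = arIndex m₀ F₀ :=
  arIndex_eq m₀ F₀
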